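/- Let F be a union-closed family and x ∈ U_F. If every A ∈ F_x^c has an x-cover (some B ∈ F_x covering A in the inclusion order on F), then x is abundant in F: there is an injection F_x^c → F_x. -/
import Mathlib


/-- If `F` is union-closed, `x ∈ U_F`, and every `A ∈ F_x^c` has an `x`-cover,
then `x` is abundant in `F`. -/
theorem stmt_13 {α : Type*} (F : Set (Set α))
    (hUC : ∀ A ∈ F, ∀ B ∈ F, A ∪ B ∈ F)
    (x : α) (hx : x ∈ ⋃₀ F)
    (hcov : ∀ A ∈ F, x ∉ A → ∃ B ∈ F, x ∈ B ∧ A ⊂ B ∧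
      ∀ C ∈ F, A ⊂ C → C ⊂ B → False) :
    ∃ f : {A : Set α // A ∈ F ∧ x ∉ A} → {A : Set α // A ∈ F ∧ x ∈ A},
      Function.Injective f := by
  classical
  choose B hBF hxB hAB hmax using hcov
  refine ⟨fun A => ⟨B A.1 A.2.1 A.2.2, hBF _ _ _, hxB _ _ _⟩, ?_⟩
  rintro ⟨A₁, hA₁, hx₁⟩ ⟨A₂, hA₂, hx₂⟩ h
  simp only [Subtype.mk.injEq] at h ⊢
  have key : ∀ (A₁ : Set α) (hA₁ : A₁ ∈ F) (hx₁ : x ∉ A₁)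
      (A₂ : Set α) (hA₂ : A₂ ∈ F) (hx₂ : x ∉ A₂),
      B A₁ hA₁ hx₁ = B A₂ hA₂ hx₂ → A₂ ⊆ A₁ := by
    intro A₁ hA₁ hx₁ A₂ hA₂ hx₂ heq
    by_contra hsub
    have hU : A₁ ∪ A₂ ∈ F := hUC _ hA₁ _ hA₂
    have h1 : A₁ ⊂ A₁ ∪ A₂ := by
      constructor
      · exact Set.subset_union_left
      · intro hle
        exact hsub (fun a ha => hle (Or.inr ha))
    have h2 : A₁ ∪ A₂ ⊂ B A₁ hA₁ hx₁ := by
      constructor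
      · exact Set.union_subset (hAB A₁ hA₁ hx₁).1 (heq ▸ (hAB A₂ hA₂ hx₂).1)
      · intro hle
        have := hle (hxB A₁ hA₁ hx₁)
        rcases this with h | h
        · exact hx₁ h
        · exact hx₂ h
    exact hmax A₁ hA₁ hx₁ _ hU h1 h2
  exact Set.Subset.antisymm (key A₂ hA₂ hx₂ A₁ hA₁ hx₁ h.symm) (key A₁ hA₁ hx₁ A₂ hA₂ hx₂ h)
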